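/- arXiv:1409.7736 — 7 statements merged into one kernel-verified Lean document; each statement's English description precedes it below -/
import Mathlib

section
/- For every finite set {q₁, …, q_m} of rational numbers there exists a nonconstant polynomial f with rational coefficients such that f(qᵢ) = 0 for every i, and such that for every complex number z with f′(z) = 0 one has f(z) ∈ {0, 1} (i.e., all finite critical values of f lie in {0,1}). -/
open Polynomial

lemma aeval_rat (r : ℚ) (p : ℚ[X]) : aeval ((r:ℂ)) p = ((p.eval r : ℚ) : ℂ) := by
  rw [aeval_def, show ((r:ℂ)) = algebraMap ℚ ℂ r from (eq_ratCast _ r).symm,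
    Polynomial.eval₂_at_apply, eq_ratCast]

lemma two_val {p : ℚ[X]} {x y : ℚ} (h : p.eval x ≠ p.eval y) : 1 ≤ p.natDegree := by
  by_contra hc
  push_neg at hc
  have h0 : p.natDegree = 0 := by omega
  obtain ⟨a, rfl⟩ := Polynomial.natDegree_eq_zero.mp h0
  simp at h

lemma exists_bel (l : ℚ) (h0 : 0 < l) (h1 : l < 1) :
    ∃ B : ℚ[X], B.eval 0 = 0 ∧ B.eval 1 = 0 ∧ B.eval l = 1 ∧ 1 ≤ B.natDegree ∧
      (∀ z : ℂ, aeval z (derivative B) = 0 → z = 0 ∨ z = 1 ∨ z = (l:ℂ)) := by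
  have hnum : 0 < l.num := Rat.num_pos.mpr h0
  have hlt : l.num < l.den := Rat.num_lt_denom_iff.mpr h1
  obtain ⟨A, hA⟩ : ∃ A : ℕ, l.num.toNat = A + 1 := ⟨l.num.toNat - 1, by omega⟩
  obtain ⟨Bb, hBb⟩ : ∃ Bb : ℕ, l.den = (A + 1) + (Bb + 1) := ⟨l.den - A - 2, by omega⟩
  have hl : l = ((A+1 : ℕ) : ℚ) / (((A+1) + (Bb+1) : ℕ) : ℚ) := by
    rw [← hBb, show (((A+1:ℕ):ℚ)) = ((l.num.toNat : ℤ) : ℚ) by push_cast [hA]; ring,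
      Int.toNat_of_nonneg hnum.le]
    exact_mod_cast (Rat.num_div_den l).symm
  have hl1 : (1:ℚ) - l ≠ 0 := sub_ne_zero.mpr h1.ne'
  have hl0 : l ≠ 0 := h0.ne'
  set c : ℚ := (l ^ (A+1) * (1 - l) ^ (Bb+1))⁻¹ with hc
  have hcne : l ^ (A+1) * (1 - l) ^ (Bb+1) ≠ 0 :=
    mul_ne_zero (pow_ne_zero _ hl0) (pow_ne_zero _ hl1)
  refine ⟨C c * (X ^ (A+1) * (1 - X) ^ (Bb+1)), by simp, by simp, ?_, ?_, ?_⟩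
  · simp only [eval_mul, eval_C, eval_pow, eval_sub, eval_one, eval_X]
    rw [hc, inv_mul_cancel₀ hcne]
  · apply two_val (x := 0) (y := l)
    have e0 : eval 0 (C c * (X ^ (A+1) * (1 - X) ^ (Bb+1))) = 0 := by simp
    have e1 : eval l (C c * (X ^ (A+1) * (1 - X) ^ (Bb+1))) = 1 := by
      simp only [eval_mul, eval_C, eval_pow, eval_sub, eval_one, eval_X]
      rw [hc, inv_mul_cancel₀ hcne]
    rw [e0, e1]; norm_num
  · intro z hz
    have hder : derivative (C c * (X ^ (A+1) * (1 - X) ^ (Bb+1))) =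
        C c * (X ^ A * (1 - X) ^ Bb *
          (C ((A+1 : ℕ) : ℚ) - C (((A+1) + (Bb+1) : ℕ) : ℚ) * X)) := by
      rw [derivative_C_mul]
      congr 1
      rw [derivative_mul, derivative_X_pow, derivative_pow]
      simp only [derivative_sub, derivative_one, derivative_X, zero_sub, Nat.add_sub_cancel]
      push_cast
      simp only [C_add, C_1]
      ring
    rw [hder] at hz
    simp only [map_mul, map_sub, map_pow, aeval_C, aeval_X, map_one, map_natCast] at hz
    have hcz : (algebraMap ℚ ℂ) c ≠ 0 := by
      simp only [eq_ratCast, ne_eq, Rat.cast_eq_zero]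
      exact inv_ne_zero hcne
    rcases mul_eq_zero.mp hz with h | h
    · exact absurd h hcz
    rcases mul_eq_zero.mp h with h' | h'
    · rcases mul_eq_zero.mp h' with h'' | h''
      · left; exact (pow_eq_zero_iff'.mp h'').1
      · right; left
        have := (pow_eq_zero_iff'.mp h'').1
        linear_combination -this
    · right; right
      have hne : ((A:ℂ) + 1 + ((Bb:ℂ) + 1)) ≠ 0 := by
        have : (((A+1) + (Bb+1) : ℕ) : ℂ) ≠ 0 := Nat.cast_ne_zero.mpr (by omega)
        push_cast at this
        convert this using 2
      rw [hl]
      push_cast at h' ⊢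
      field_simp
      linear_combination -h'

lemma final_eval (G2 H : ℚ[X]) (z : ℂ) (r : ℚ) (h : aeval z H = ((r : ℚ) : ℂ))
    (hval : G2.eval r = 0 ∨ G2.eval r = 1) :
    aeval z (G2.comp H) = 0 ∨ aeval z (G2.comp H) = 1 := by
  rw [aeval_comp, h, aeval_rat]
  rcases hval with h' | h' <;> simp [h']

lemma rec_lemma (n : ℕ) : ∀ S : Finset ℚ, (0:ℚ) ∈ S → (1:ℚ) ∈ S →
    (S \ {0,1}).card ≤ n →
    ∃ G : ℚ[X], 1 ≤ G.natDegree ∧ (∀ q ∈ S, G.eval q = 0 ∨ G.eval q = 1) ∧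
      ∀ z : ℂ, aeval z (derivative G) = 0 → aeval z G = 0 ∨ aeval z G = 1 := by
  induction n with
  | zero =>
    intro S h0 h1 hcard
    have hsub : S ⊆ {0,1} := by
      intro q hq
      by_contra hq'
      have hmem : q ∈ S \ {0,1} := Finset.mem_sdiff.mpr ⟨hq, hq'⟩
      have := Finset.card_pos.mpr ⟨q, hmem⟩
      omega
    refine ⟨X, by simp, ?_, ?_⟩
    · intro q hq
      have := hsub hq
      simp only [Finset.mem_insert, Finset.mem_singleton] at this
      rcases this with h | h <;> simp [h]
    · intro z hz; simp at hz
  | succ n ih =>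
    intro S h0 h1 hcard
    by_cases hS : (S \ ({0,1} : Finset ℚ)).card = 0
    · exact ih S h0 h1 (by omega)
    have hne : S.Nonempty := ⟨0, h0⟩
    set m := S.min' hne with hm
    set M := S.max' hne with hM
    have hm0 : m ≤ 0 := S.min'_le 0 h0
    have hM1 : (1:ℚ) ≤ M := S.le_max' 1 h1
    have hd : (0:ℚ) < M - m := by linarith
    set φ : ℚ → ℚ := fun t => (t - m) / (M - m) with hφ
    have hφinj : Function.Injective φ := by
      intro x y hxy
      simp only [hφ] at hxy
      rw [div_eq_div_iff hd.ne' hd.ne'] at hxy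
      have := mul_right_cancel₀ hd.ne' hxy
      linarith
    set S1 := S.image φ with hS1
    have h0S1 : (0:ℚ) ∈ S1 := Finset.mem_image.mpr ⟨m, S.min'_mem hne, by simp [hφ]⟩
    have h1S1 : (1:ℚ) ∈ S1 := Finset.mem_image.mpr ⟨M, S.max'_mem hne, div_self hd.ne'⟩
    have hrange : ∀ x ∈ S1, 0 ≤ x ∧ x ≤ 1 := by
      intro x hx
      obtain ⟨t, ht, rfl⟩ := Finset.mem_image.mp hx
      have htm : m ≤ t := S.min'_le t ht
      have htM : t ≤ M := S.le_max' t ht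
      constructor
      · exact div_nonneg (by linarith) hd.le
      · rw [div_le_one hd]; linarith
    have hcard3 : 3 ≤ S.card := by
      obtain ⟨t, ht⟩ := Finset.card_pos.mp (by omega : 0 < (S \ ({0,1} : Finset ℚ)).card)
      rw [Finset.mem_sdiff] at ht
      have ht0 : t ≠ 0 := by intro h; exact ht.2 (by simp [h])
      have ht1 : t ≠ 1 := by intro h; exact ht.2 (by simp [h])
      have hsub : ({t, 0, 1} : Finset ℚ) ⊆ S := by
        intro x hx
        simp only [Finset.mem_insert, Finset.mem_singleton] at hx
        rcases hx with h | h | h <;> subst h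
        exacts [ht.1, h0, h1]
      have : ({t, 0, 1} : Finset ℚ).card = 3 := by
        rw [Finset.card_insert_of_notMem (by simp [ht0, ht1]),
          Finset.card_insert_of_notMem (by norm_num), Finset.card_singleton]
      rw [← this]
      exact Finset.card_le_card hsub
    have hcardS1 : S1.card = S.card := Finset.card_image_of_injective S hφinj
    have hpos : 0 < (S1 \ ({0,1} : Finset ℚ)).card := by
      have h2 : ({0,1} : Finset ℚ).card = 2 := by
        rw [Finset.card_insert_of_notMem (by norm_num), Finset.card_singleton]
      have := Finset.le_card_sdiff ({0,1} : Finset ℚ) S1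
      omega
    obtain ⟨l, hl⟩ := Finset.card_pos.mp hpos
    rw [Finset.mem_sdiff] at hl
    have hle0 : l ≠ 0 := by intro h; exact hl.2 (by simp [h])
    have hle1 : l ≠ 1 := by intro h; exact hl.2 (by simp [h])
    obtain ⟨hge0, hge1⟩ := hrange l hl.1
    have hl0 : 0 < l := lt_of_le_of_ne hge0 (Ne.symm hle0)
    have hl1 : l < 1 := lt_of_le_of_ne hge1 hle1
    obtain ⟨B, hB0, hB1, hBl, hBdeg, hBcrit⟩ := exists_bel l hl0 hl1
    set S2 := (S1.image B.eval) ∪ ({0,1} : Finset ℚ) with hS2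
    have h0S2 : (0:ℚ) ∈ S2 := by simp [hS2]
    have h1S2 : (1:ℚ) ∈ S2 := by simp [hS2]
    have hsub2 : S2 \ ({0,1} : Finset ℚ) ⊆ (S1 \ ({0,1,l} : Finset ℚ)).image B.eval := by
      intro y hy
      rw [Finset.mem_sdiff] at hy
      obtain ⟨hy1, hy2⟩ := hy
      rcases Finset.mem_union.mp hy1 with h | h
      · obtain ⟨x, hx, rfl⟩ := Finset.mem_image.mp h
        refine Finset.mem_image.mpr ⟨x, Finset.mem_sdiff.mpr ⟨hx, ?_⟩, rfl⟩
        intro hx'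
        simp only [Finset.mem_insert, Finset.mem_singleton] at hx'
        rcases hx' with h' | h' | h' <;> subst h' <;> apply hy2
        · simp [hB0]
        · simp [hB1]
        · simp [hBl]
      · exact absurd h hy2
    have hsub3 : ({0,1,l} : Finset ℚ) ⊆ S1 := by
      intro x hx
      simp only [Finset.mem_insert, Finset.mem_singleton] at hx
      rcases hx with h | h | h <;> subst h
      exacts [h0S1, h1S1, hl.1]
    have hcard013 : ({0,1,l} : Finset ℚ).card = 3 := by
      rw [Finset.card_insert_of_notMem (by norm_num [Ne.symm hle0]),
        Finset.card_insert_of_notMem (by norm_num [Ne.symm hle1]), Finset.card_singleton]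
    have hcard2 : (S2 \ ({0,1} : Finset ℚ)).card ≤ n := by
      have c1 := Finset.card_le_card hsub2
      have c2 : ((S1 \ ({0,1,l} : Finset ℚ)).image B.eval).card ≤ (S1 \ ({0,1,l} : Finset ℚ)).card :=
        Finset.card_image_le
      have c3 : (S1 \ ({0,1,l} : Finset ℚ)).card = S1.card - 3 := by
        rw [Finset.card_sdiff_of_subset hsub3, hcard013]
      have hsub01 : ({0,1} : Finset ℚ) ⊆ S := by
        intro x hx
        simp only [Finset.mem_insert, Finset.mem_singleton] at hx
        rcases hx with h | h <;> subst h
        exacts [h0, h1]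
      have c4 : (S \ ({0,1} : Finset ℚ)).card = S.card - 2 := by
        rw [Finset.card_sdiff_of_subset hsub01,
          show ({0,1} : Finset ℚ).card = 2 by
            rw [Finset.card_insert_of_notMem (by norm_num), Finset.card_singleton]]
      omega
    obtain ⟨G2, hG2deg, hG2val, hG2crit⟩ := ih S2 h0S2 h1S2 hcard2
    set Ap : ℚ[X] := C (M - m)⁻¹ * (X - C m) with hAp
    have hevalA : ∀ t, Ap.eval t = φ t := by
      intro t
      simp only [hAp, eval_mul, eval_C, eval_sub, eval_X, hφ]
      rw [div_eq_mul_inv]; ring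
    set H : ℚ[X] := B.comp Ap with hH
    refine ⟨G2.comp H, ?_, ?_, ?_⟩
    · rw [natDegree_comp, hH, natDegree_comp]
      have hAdeg : 1 ≤ Ap.natDegree := by
        apply two_val (x := m) (y := M)
        rw [hevalA, hevalA]
        simp only [hφ, sub_self, zero_div, div_self hd.ne']
        norm_num
      have := Nat.mul_le_mul (Nat.mul_le_mul hG2deg hBdeg) hAdeg
      calc 1 = 1 * 1 * 1 := by norm_num
      _ ≤ G2.natDegree * B.natDegree * Ap.natDegree := this
      _ = G2.natDegree * (B.natDegree * Ap.natDegree) := by ring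
    · intro q hq
      rw [eval_comp, hH, eval_comp, hevalA]
      have hmem1 : φ q ∈ S1 := Finset.mem_image_of_mem φ hq
      have hmem2 : B.eval (φ q) ∈ S2 :=
        Finset.mem_union_left _ (Finset.mem_image_of_mem _ hmem1)
      exact hG2val _ hmem2
    · intro z hz
      rw [derivative_comp, map_mul] at hz
      rcases mul_eq_zero.mp hz with h | h
      · -- critical point of H
        rw [hH, derivative_comp, map_mul] at h
        have hdA : derivative Ap = C (M - m)⁻¹ := by
          simp [hAp]
        rw [hdA, aeval_C] at h
        have hCne : (algebraMap ℚ ℂ) (M - m)⁻¹ ≠ 0 := by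
          simp only [eq_ratCast, ne_eq, Rat.cast_eq_zero]
          exact inv_ne_zero hd.ne'
        have h' : aeval (aeval z Ap) (derivative B) = 0 := by
          rcases mul_eq_zero.mp h with h'' | h''
          · exact absurd h'' hCne
          · rwa [aeval_comp] at h''
        have hzH : ∀ r : ℚ, aeval z Ap = ((r : ℚ) : ℂ) → aeval z H = ((B.eval r : ℚ) : ℂ) := by
          intro r hr
          rw [hH, aeval_comp, hr, aeval_rat]
        rcases hBcrit _ h' with h0' | h1' | hl'
        · exact final_eval G2 H z (B.eval 0) (hzH 0 (by rw [h0']; norm_num))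
            (by rw [hB0]; exact hG2val 0 h0S2)
        · exact final_eval G2 H z (B.eval 1) (hzH 1 (by rw [h1']; norm_num))
            (by rw [hB1]; exact hG2val 0 h0S2)
        · exact final_eval G2 H z (B.eval l) (hzH l hl')
            (by rw [hBl]; exact hG2val 1 h1S2)
      · -- critical point of G2
        rw [aeval_comp] at h
        rw [aeval_comp]
        exact hG2crit _ h


/-- **Belyi's final lemma.** For every finite set of rational numbers there is a
nonconstant polynomial `f ∈ ℚ[X]` vanishing at all of them, all of whose finite
critical values (values at complex zeros of `f'`) lie in `{0, 1}`. -/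
theorem exists_rat_poly_vanishing_with_critical_values_in_zero_one
    (s : Finset ℚ) :
    ∃ f : Polynomial ℚ, 1 ≤ f.natDegree ∧ (∀ q ∈ s, f.eval q = 0) ∧
      ∀ z : ℂ, Polynomial.aeval z (Polynomial.derivative f) = 0 →
        Polynomial.aeval z f = 0 ∨ Polynomial.aeval z f = 1 := by
  obtain ⟨G, hGdeg, hGval, hGcrit⟩ := rec_lemma ((insert 0 (insert 1 s)) \ {0,1}).card
      (insert 0 (insert 1 s)) (by simp) (by simp) le_rfl
  set p : ℚ[X] := C 4 * X - C 4 * X ^ 2 with hp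
  have hp0 : p.eval 0 = 0 := by simp [hp]
  have hp1 : p.eval 1 = 0 := by norm_num [hp]
  have hph : p.eval (1/2) = 1 := by norm_num [hp]
  have hdp : derivative p = C 4 - C 8 * X := by
    have h8 : (C (8:ℚ)) = C 4 * C 2 := by rw [← C_mul]; norm_num
    rw [hp]
    simp only [derivative_sub, derivative_C_mul, derivative_X, derivative_pow,
      Nat.cast_ofNat, derivative_X_pow, h8]
    ring
  refine ⟨p.comp G, ?_, ?_, ?_⟩
  · rw [natDegree_comp]
    have hpdeg : 1 ≤ p.natDegree := two_val (x := 0) (y := 1/2) (by rw [hp0, hph]; norm_num)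
    calc 1 = 1 * 1 := by norm_num
    _ ≤ p.natDegree * G.natDegree := Nat.mul_le_mul hpdeg hGdeg
  · intro q hq
    rw [eval_comp]
    rcases hGval q (by simp [hq]) with h | h <;> rw [h]
    exacts [hp0, hp1]
  · intro z hz
    rw [derivative_comp, map_mul] at hz
    rcases mul_eq_zero.mp hz with h | h
    · rcases hGcrit z h with h' | h'
      · left
        rw [aeval_comp, h', show (0:ℂ) = ((0:ℚ):ℂ) by norm_num, aeval_rat, hp0]
      · left
        rw [aeval_comp, h', show (1:ℂ) = ((1:ℚ):ℂ) by norm_num, aeval_rat, hp1]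
        norm_num
    · rw [hdp, aeval_comp] at h
      have hw : aeval z G = ((1/2 : ℚ) : ℂ) := by
        simp only [map_sub, map_mul, aeval_C, aeval_X, eq_ratCast] at h
        push_cast at h ⊢
        linear_combination -h/8
      right
      rw [aeval_comp, hw, aeval_rat, hph]
      norm_num
end

section
/- Let m, n ≥ 1 be integers and let P(x) = ((m+n)^{m+n}/(m^m·n^n))·x^m·(1−x)^n, a polynomial with rational coefficients. Then P(0) = 0, P(1) = 0, P(m/(m+n)) = 1, and every z ∈ ℂ with P′(z) = 0 satisfies P(z) ∈ {0, 1}. -/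
open Polynomial

lemma belyi_key {F : Type*} [Field F] (m n : ℕ) (hm : (m : F) ≠ 0) (hn : (n : F) ≠ 0)
    (hmn : (m : F) + n ≠ 0) :
    (((m : F) + n) ^ (m + n) / ((m : F) ^ m * (n : F) ^ n)) * ((m : F) / ((m : F) + n)) ^ m *
      (1 - (m : F) / ((m : F) + n)) ^ n = 1 := by
  have h1 : 1 - (m : F) / ((m : F) + n) = (n : F) / ((m : F) + n) := by field_simp; ring
  rw [h1, div_pow, div_pow, pow_add, div_mul_div_comm, div_mul_div_comm, div_eq_one_iff_eq]
  · ring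
  · exact mul_ne_zero (mul_ne_zero (mul_ne_zero (pow_ne_zero _ hm) (pow_ne_zero _ hn))
      (pow_ne_zero _ hmn)) (pow_ne_zero _ hmn)

lemma belyi_deriv (a b : ℕ) (c : ℚ) :
    derivative (C c * X ^ (a+1) * (1 - X) ^ (b+1)) =
      C c * X ^ a * (1 - X) ^ b * (((a : ℚ[X]) + 1) - ((a : ℚ[X]) + (b : ℚ[X]) + 2) * X) := by
  simp [derivative_mul, derivative_pow]
  ring

/-- **The Belyi polynomial.** For `m, n ≥ 1`, the polynomial
`P(x) = ((m+n)^(m+n) / (m^m * n^n)) * x^m * (1-x)^n` satisfies `P(0) = 0`,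
`P(1) = 0`, `P(m/(m+n)) = 1`, and every complex critical point `z` (i.e. with
`P'(z) = 0`) has `P(z) ∈ {0, 1}`. -/
theorem belyi_polynomial_critical_values (m n : ℕ) (hm : 1 ≤ m) (hn : 1 ≤ n) :
    let P : Polynomial ℚ :=
      C ((((m : ℚ) + n) ^ (m + n)) / ((m : ℚ) ^ m * (n : ℚ) ^ n)) * X ^ m * (1 - X) ^ n
    P.eval 0 = 0 ∧ P.eval 1 = 0 ∧ P.eval ((m : ℚ) / ((m : ℚ) + n)) = 1 ∧
      ∀ z : ℂ, Polynomial.aeval z (Polynomial.derivative P) = 0 →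
        Polynomial.aeval z P = 0 ∨ Polynomial.aeval z P = 1 := by
  intro P
  have hmQ : (m : ℚ) ≠ 0 := Nat.cast_ne_zero.2 (by omega)
  have hnQ : (n : ℚ) ≠ 0 := Nat.cast_ne_zero.2 (by omega)
  have hmnQ : (m : ℚ) + n ≠ 0 := by
    have h : ((m + n : ℕ) : ℚ) ≠ 0 := Nat.cast_ne_zero.2 (by omega)
    push_cast at h; exact h
  have hc0 : ((((m : ℚ) + n) ^ (m + n)) / ((m : ℚ) ^ m * (n : ℚ) ^ n)) ≠ 0 :=
    div_ne_zero (pow_ne_zero _ hmnQ) (mul_ne_zero (pow_ne_zero _ hmQ) (pow_ne_zero _ hnQ))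
  refine ⟨?_, ?_, ?_, ?_⟩
  · simp [P, zero_pow (by omega : m ≠ 0)]
  · simp [P, zero_pow (by omega : n ≠ 0)]
  · simpa [P] using belyi_key (F := ℚ) m n hmQ hnQ hmnQ
  · intro z hz
    have hmC : (m : ℂ) ≠ 0 := Nat.cast_ne_zero.2 (by omega)
    have hnC : (n : ℂ) ≠ 0 := Nat.cast_ne_zero.2 (by omega)
    have hmnC : (m : ℂ) + n ≠ 0 := by
      have h : ((m + n : ℕ) : ℂ) ≠ 0 := Nat.cast_ne_zero.2 (by omega)
      push_cast at h; exact h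
    have hcC : (algebraMap ℚ ℂ) ((((m : ℚ) + n) ^ (m + n)) / ((m : ℚ) ^ m * (n : ℚ) ^ n)) ≠ 0 := by
      exact fun h => hc0 ((algebraMap ℚ ℂ).injective (by rw [h, map_zero]))
    obtain ⟨a, rfl⟩ : ∃ a, m = a + 1 := ⟨m - 1, by omega⟩
    obtain ⟨b, rfl⟩ : ∃ b, n = b + 1 := ⟨n - 1, by omega⟩
    rw [show P = C ((((a+1 : ℕ) : ℚ) + ((b+1 : ℕ) : ℚ)) ^ ((a+1) + (b+1)) /
        (((a+1 : ℕ) : ℚ) ^ (a+1) * ((b+1 : ℕ) : ℚ) ^ (b+1))) * X ^ (a+1) * (1 - X) ^ (b+1)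
      from rfl, belyi_deriv] at hz
    simp only [map_mul, map_sub, map_add, aeval_C, aeval_X, map_pow, map_one, map_natCast,
      map_ofNat, mul_eq_zero] at hz
    have hPz : (aeval z) P = (algebraMap ℚ ℂ)
        ((((a+1 : ℕ) : ℚ) + ((b+1 : ℕ) : ℚ)) ^ ((a+1) + (b+1)) /
          (((a+1 : ℕ) : ℚ) ^ (a+1) * ((b+1 : ℕ) : ℚ) ^ (b+1))) * z ^ (a+1) * (1 - z) ^ (b+1) := by
      simp [P]
    rcases hz with ((hc' | hza) | h1b) | hlin
    · exact absurd hc' hcC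
    · left
      have hz0 : z = 0 := by
        rcases Nat.eq_zero_or_pos a with h | h
        · exact absurd hza (by simp [h])
        · exact pow_eq_zero_iff (by omega) |>.mp hza
      subst hz0
      rw [hPz]
      simp [zero_pow (show a + 1 ≠ 0 by omega)]
    · left
      have hz1 : z = 1 := by
        have h10 : (1 : ℂ) - z = 0 := by
          rcases Nat.eq_zero_or_pos b with h | h
          · exact absurd h1b (by simp [h])
          · exact pow_eq_zero_iff (by omega) |>.mp h1b
        linear_combination -h10
      subst hz1
      rw [hPz]
      simp
    · right
      have hzv : z = ((a : ℂ) + 1) / ((a : ℂ) + (b : ℂ) + 2) := by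
        have hne : (a : ℂ) + (b : ℂ) + 2 ≠ 0 := by
          intro h; apply hmnC; push_cast; linear_combination h
        field_simp
        linear_combination -hlin
      have key := belyi_key (F := ℂ) (a+1) (b+1) hmC hnC hmnC
      rw [hPz, hzv]
      simp only [map_div₀, map_pow, map_mul, map_natCast]
      push_cast at key ⊢
      linear_combination key
end

section
/- Let g ∈ ℚ[X] be a squarefree polynomial of degree ≥ 1. Then there exists a nonzero polynomial g₂ ∈ ℚ[X] with deg g₂ < deg g such that g₂(g(c)) = 0 for every complex number c with g′(c) = 0. (In other words, all finite critical values of g are roots of a rational polynomial of strictly smaller degree than g.) -/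
/-- **Degree-decreasing lemma in Belyi's algorithm.** If `g ∈ ℚ[X]` is squarefree of
degree at least 1, then there is a nonzero polynomial `g₂ ∈ ℚ[X]` of strictly smaller
degree vanishing at all finite critical values of `g`, i.e. `g₂(g(c)) = 0` for every
complex `c` with `g'(c) = 0`. -/
theorem exists_smaller_degree_poly_annihilating_critical_values
    (g : Polynomial ℚ) (hsf : Squarefree g) (hdeg : 1 ≤ g.natDegree) :
    ∃ g₂ : Polynomial ℚ, g₂ ≠ 0 ∧ g₂.natDegree < g.natDegree ∧
      ∀ c : ℂ, Polynomial.aeval c (Polynomial.derivative g) = 0 →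
        Polynomial.aeval (Polynomial.aeval c g) g₂ = 0 := by
  set g' := Polynomial.derivative g with hg'
  have hdeg' : g'.natDegree ≤ g.natDegree - 1 :=
    Polynomial.natDegree_derivative_le g
  have hne : g' ≠ 0 := by
    intro h
    have := Polynomial.natDegree_eq_zero_of_derivative_eq_zero h
    omega
  let A := AdjoinRoot g'
  let pb : PowerBasis ℚ A := AdjoinRoot.powerBasis hne
  haveI : Module.Finite ℚ A := pb.finite
  set x : A := AdjoinRoot.mk g' g with hx
  let M : Module.End ℚ A := Algebra.lmul ℚ A x
  refine ⟨M.charpoly, M.charpoly_monic.ne_zero, ?_, ?_⟩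
  · have h1 : M.charpoly.natDegree = Module.finrank ℚ A := M.charpoly_natDegree
    have h2 : Module.finrank ℚ A = g'.natDegree := by
      rw [pb.finrank]; rfl
    omega
  · intro c hc
    have hc' : Polynomial.aeval c g' = 0 := hc
    have hx0 : Polynomial.aeval x M.charpoly = 0 := by
      have h1 : Polynomial.aeval M M.charpoly = 0 := M.aeval_self_charpoly
      have h2 : Polynomial.aeval M M.charpoly =
          Algebra.lmul ℚ A (Polynomial.aeval x M.charpoly) :=
        Polynomial.aeval_algHom_apply (Algebra.lmul ℚ A) x M.charpoly
      have := h2.symm.trans h1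
      calc Polynomial.aeval x M.charpoly
          = Algebra.lmul ℚ A (Polynomial.aeval x M.charpoly) 1 := by
            simp
        _ = (0 : Module.End ℚ A) 1 := by rw [this]
        _ = 0 := rfl
    let φ : A →ₐ[ℚ] ℂ := AdjoinRoot.liftAlgHom g' (Algebra.ofId ℚ ℂ) c hc'
    have hφx : φ x = Polynomial.aeval c g := AdjoinRoot.liftAlgHom_mk g' (Algebra.ofId ℚ ℂ) c hc' g
    calc Polynomial.aeval (Polynomial.aeval c g) M.charpoly
        = Polynomial.aeval (φ x) M.charpoly := by rw [hφx]
      _ = φ (Polynomial.aeval x M.charpoly) := Polynomial.aeval_algHom_apply φ x _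
      _ = 0 := by rw [hx0]; exact map_zero φ
end

section
/- Let k be a field and let F, F′ ∈ k[X]. The quotient k-algebras k[X]/(F) and k[X]/(F′) are isomorphic as k-algebras if and only if there exist polynomials P₁, P₂, H₁, H₂, G₁, G₂ ∈ k[X] such that: F(P₁(X)) = H₁(X)·F′(X); F′(P₂(X)) = H₂(X)·F(X); P₁(P₂(X)) = X + G₁(X)·F(X); and P₂(P₁(X)) = X + G₂(X)·F′(X). -/
open Polynomial

/-- Key computation: the image of `mk Q` under an algebra map determined by `mk' P`. -/
private lemma aeval_mk_comp {k : Type*} [Field k] (I : Ideal (Polynomial k))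
    (P Q : Polynomial k) :
    Polynomial.aeval (Ideal.Quotient.mk I P) Q = Ideal.Quotient.mk I (Q.comp P) := by
  rw [Polynomial.comp_eq_aeval]
  exact Polynomial.aeval_algHom_apply (Ideal.Quotient.mkₐ k I) P Q

/-- **Isomorphism of quotients of `k[X]` via polynomial identities.** For a field `k`
and `F, F' ∈ k[X]`, the `k`-algebras `k[X]/(F)` and `k[X]/(F')` are isomorphic iff
there are `P₁, P₂, H₁, H₂, G₁, G₂ ∈ k[X]` with `F(P₁(X)) = H₁·F'`,
`F'(P₂(X)) = H₂·F`, `P₁(P₂(X)) = X + G₁·F` and `P₂(P₁(X)) = X + G₂·F'`. -/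
theorem quotient_algEquiv_iff_polynomial_identities
    (k : Type*) [Field k] (F F' : Polynomial k) :
    Nonempty ((Polynomial k ⧸ Ideal.span {F}) ≃ₐ[k] (Polynomial k ⧸ Ideal.span {F'})) ↔
      ∃ P₁ P₂ H₁ H₂ G₁ G₂ : Polynomial k,
        F.comp P₁ = H₁ * F' ∧
        F'.comp P₂ = H₂ * F ∧
        P₁.comp P₂ = X + G₁ * F ∧
        P₂.comp P₁ = X + G₂ * F' := by
  set I : Ideal (Polynomial k) := Ideal.span {F}
  set I' : Ideal (Polynomial k) := Ideal.span {F'}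
  constructor
  · rintro ⟨e⟩
    obtain ⟨P₁, hP₁⟩ := Ideal.Quotient.mk_surjective (e (Ideal.Quotient.mk I X))
    obtain ⟨P₂, hP₂⟩ := Ideal.Quotient.mk_surjective (e.symm (Ideal.Quotient.mk I' X))
    have key : ∀ Q : Polynomial k,
        e (Ideal.Quotient.mk I Q) = Ideal.Quotient.mk I' (Q.comp P₁) := by
      intro Q
      have := Polynomial.aeval_algHom_apply
        (e.toAlgHom.comp (Ideal.Quotient.mkₐ k I)) X Q
      simp only [AlgHom.comp_apply, AlgEquiv.toAlgHom_eq_coe, AlgHom.coe_coe,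
        Ideal.Quotient.mkₐ_eq_mk, Polynomial.aeval_X_left_apply, AlgEquiv.coe_algHom] at this
      rw [← this, ← hP₁, aeval_mk_comp]
    have key' : ∀ Q : Polynomial k,
        e.symm (Ideal.Quotient.mk I' Q) = Ideal.Quotient.mk I (Q.comp P₂) := by
      intro Q
      have := Polynomial.aeval_algHom_apply
        (e.symm.toAlgHom.comp (Ideal.Quotient.mkₐ k I')) X Q
      simp only [AlgHom.comp_apply, AlgEquiv.toAlgHom_eq_coe, AlgHom.coe_coe,
        Ideal.Quotient.mkₐ_eq_mk, Polynomial.aeval_X_left_apply, AlgEquiv.coe_algHom] at this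
      rw [← this, ← hP₂, aeval_mk_comp]
    have mem_iff : ∀ (J : Ideal (Polynomial k)) (G Q : Polynomial k), J = Ideal.span {G} →
        Ideal.Quotient.mk J Q = 0 → ∃ H, Q = H * G := by
      rintro J G Q rfl h
      rw [Ideal.Quotient.eq_zero_iff_mem, Ideal.mem_span_singleton] at h
      obtain ⟨H, hH⟩ := h
      exact ⟨H, by rw [hH, mul_comm]⟩
    have h1 : ∃ H₁, F.comp P₁ = H₁ * F' := by
      refine mem_iff I' F' _ rfl ?_
      rw [← key]
      have hF : Ideal.Quotient.mk I F = 0 := by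
        rw [Ideal.Quotient.eq_zero_iff_mem]; exact Ideal.mem_span_singleton_self F
      rw [hF, map_zero]
    have h2 : ∃ H₂, F'.comp P₂ = H₂ * F := by
      refine mem_iff I F _ rfl ?_
      rw [← key']
      have hF' : Ideal.Quotient.mk I' F' = 0 := by
        rw [Ideal.Quotient.eq_zero_iff_mem]; exact Ideal.mem_span_singleton_self F'
      rw [hF', map_zero]
    have h3 : ∃ G₁, P₁.comp P₂ = X + G₁ * F := by
      have : Ideal.Quotient.mk I (P₁.comp P₂ - X) = 0 := by
        rw [map_sub, sub_eq_zero, ← key', hP₁, AlgEquiv.symm_apply_apply]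
      obtain ⟨G₁, hG⟩ := mem_iff I F _ rfl this
      exact ⟨G₁, by linear_combination hG⟩
    have h4 : ∃ G₂, P₂.comp P₁ = X + G₂ * F' := by
      have : Ideal.Quotient.mk I' (P₂.comp P₁ - X) = 0 := by
        rw [map_sub, sub_eq_zero, ← key, hP₂, AlgEquiv.apply_symm_apply]
      obtain ⟨G₂, hG⟩ := mem_iff I' F' _ rfl this
      exact ⟨G₂, by linear_combination hG⟩
    obtain ⟨H₁, h1⟩ := h1; obtain ⟨H₂, h2⟩ := h2
    obtain ⟨G₁, h3⟩ := h3; obtain ⟨G₂, h4⟩ := h4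
    exact ⟨P₁, P₂, H₁, H₂, G₁, G₂, h1, h2, h3, h4⟩
  · rintro ⟨P₁, P₂, H₁, H₂, G₁, G₂, h1, h2, h3, h4⟩
    have hdvd : ∀ (G Q : Polynomial k) (J : Ideal (Polynomial k)), J = Ideal.span {G} →
        (∃ H, Q = H * G) → Ideal.Quotient.mk J Q = 0 := by
      rintro G Q J rfl ⟨H, rfl⟩
      rw [Ideal.Quotient.eq_zero_iff_mem, mul_comm, Ideal.mem_span_singleton]
      exact dvd_mul_right G H
    -- forward algebra hom
    let f : Polynomial k →ₐ[k] Polynomial k ⧸ I' :=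
      Polynomial.aeval (Ideal.Quotient.mk I' P₁)
    have hf : ∀ a ∈ I, f a = 0 := by
      intro a ha
      rw [Ideal.mem_span_singleton] at ha
      obtain ⟨c, rfl⟩ := ha
      show Polynomial.aeval _ (F * c) = 0
      rw [map_mul, aeval_mk_comp, h1]
      simp [hdvd F' (H₁ * F') I' rfl ⟨H₁, rfl⟩]
    let g : Polynomial k →ₐ[k] Polynomial k ⧸ I :=
      Polynomial.aeval (Ideal.Quotient.mk I P₂)
    have hg : ∀ a ∈ I', g a = 0 := by
      intro a ha
      rw [Ideal.mem_span_singleton] at ha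
      obtain ⟨c, rfl⟩ := ha
      show Polynomial.aeval _ (F' * c) = 0
      rw [map_mul, aeval_mk_comp, h2]
      simp [hdvd F (H₂ * F) I rfl ⟨H₂, rfl⟩]
    let φ := Ideal.Quotient.liftₐ I f hf
    let ψ := Ideal.Quotient.liftₐ I' g hg
    have hφ : ∀ Q, φ (Ideal.Quotient.mk I Q) = Ideal.Quotient.mk I' (Q.comp P₁) := by
      intro Q
      show f Q = _
      exact aeval_mk_comp I' P₁ Q
    have hψ : ∀ Q, ψ (Ideal.Quotient.mk I' Q) = Ideal.Quotient.mk I (Q.comp P₂) := by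
      intro Q
      show g Q = _
      exact aeval_mk_comp I P₂ Q
    refine ⟨AlgEquiv.ofAlgHom φ ψ ?_ ?_⟩
    · apply Ideal.Quotient.algHom_ext
      apply Polynomial.algHom_ext
      simp only [AlgHom.comp_apply, Ideal.Quotient.mkₐ_eq_mk, AlgHom.coe_id, id_eq]
      rw [hψ, hφ, Polynomial.comp_assoc, h4, Polynomial.X_comp, map_add]
      have : Ideal.Quotient.mk I' (G₂ * F') = 0 := hdvd F' _ I' rfl ⟨G₂, rfl⟩
      rw [this, add_zero]
    · apply Ideal.Quotient.algHom_ext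
      apply Polynomial.algHom_ext
      simp only [AlgHom.comp_apply, Ideal.Quotient.mkₐ_eq_mk, AlgHom.coe_id, id_eq]
      rw [hφ, hψ, Polynomial.comp_assoc, h3, Polynomial.X_comp, map_add]
      have : Ideal.Quotient.mk I (G₁ * F) = 0 := hdvd F _ I rfl ⟨G₁, rfl⟩
      rw [this, add_zero]
end

section
/- In the symmetric group Sym(24) on {1,…,24}, let x = (4 1 24 3)(9 6 7 10)(16 13 12 15)(21 18 19 22) and y = (1 2 3)(4 5 6)(9 8 7)(12 11 10)(13 14 15)(16 17 18)(21 20 19)(24 23 22). Then: (a) there exists ω ∈ Sym(24) with ω⁻¹xω = x⁻¹ and ω⁻¹yω = y⁻¹ (for instance ω = (1 7 13 19)(2 8 14 20)(3 9 15 21)(4 10 16 22)(5 11 17 23)(6 12 18 24)); and (b) there is no ω ∈ Sym(24) with ω² = 1 satisfying both ω⁻¹xω = x⁻¹ and ω⁻¹yω = y⁻¹. -/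
open Equiv

set_option maxRecDepth 40000

/-- Table form of the permutation `x`. -/
def xP : Equiv.Perm (Fin 24) :=
  ⟨![3, 0, 2, 4, 1, 5, 7, 10, 8, 6, 9, 11, 15, 12, 14, 16, 13, 17, 19, 22, 20, 18, 21, 23], ![1, 4, 2, 0, 3, 5, 9, 6, 8, 10, 7, 11, 13, 16, 14, 12, 15, 17, 21, 18, 20, 22, 19, 23],
    (by decide : ∀ m : Fin 24, (![1, 4, 2, 0, 3, 5, 9, 6, 8, 10, 7, 11, 13, 16, 14, 12, 15, 17, 21, 18, 20, 22, 19, 23] : Fin 24 → Fin 24) (![3, 0, 2, 4, 1, 5, 7, 10, 8, 6, 9, 11, 15, 12, 14, 16, 13, 17, 19, 22, 20, 18, 21, 23] m) = m),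
    (by decide : ∀ m : Fin 24, (![3, 0, 2, 4, 1, 5, 7, 10, 8, 6, 9, 11, 15, 12, 14, 16, 13, 17, 19, 22, 20, 18, 21, 23] : Fin 24 → Fin 24) (![1, 4, 2, 0, 3, 5, 9, 6, 8, 10, 7, 11, 13, 16, 14, 12, 15, 17, 21, 18, 20, 22, 19, 23] m) = m)⟩

/-- Table form of the permutation `y`. -/
def yP : Equiv.Perm (Fin 24) :=
  ⟨![23, 2, 3, 1, 5, 6, 4, 9, 7, 8, 12, 10, 11, 14, 15, 13, 17, 18, 16, 21, 19, 20, 0, 22], ![22, 3, 1, 2, 6, 4, 5, 8, 9, 7, 11, 12, 10, 15, 13, 14, 18, 16, 17, 20, 21, 19, 23, 0],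
    (by decide : ∀ m : Fin 24, (![22, 3, 1, 2, 6, 4, 5, 8, 9, 7, 11, 12, 10, 15, 13, 14, 18, 16, 17, 20, 21, 19, 23, 0] : Fin 24 → Fin 24) (![23, 2, 3, 1, 5, 6, 4, 9, 7, 8, 12, 10, 11, 14, 15, 13, 17, 18, 16, 21, 19, 20, 0, 22] m) = m),
    (by decide : ∀ m : Fin 24, (![23, 2, 3, 1, 5, 6, 4, 9, 7, 8, 12, 10, 11, 14, 15, 13, 17, 18, 16, 21, 19, 20, 0, 22] : Fin 24 → Fin 24) (![22, 3, 1, 2, 6, 4, 5, 8, 9, 7, 11, 12, 10, 15, 13, 14, 18, 16, 17, 20, 21, 19, 23, 0] m) = m)⟩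

/-- Table form of the permutation `ω₀`. -/
def wP : Equiv.Perm (Fin 24) :=
  ⟨![6, 7, 8, 9, 10, 11, 12, 13, 14, 15, 16, 17, 18, 19, 20, 21, 22, 23, 0, 1, 2, 3, 4, 5], ![18, 19, 20, 21, 22, 23, 0, 1, 2, 3, 4, 5, 6, 7, 8, 9, 10, 11, 12, 13, 14, 15, 16, 17],
    (by decide : ∀ m : Fin 24, (![18, 19, 20, 21, 22, 23, 0, 1, 2, 3, 4, 5, 6, 7, 8, 9, 10, 11, 12, 13, 14, 15, 16, 17] : Fin 24 → Fin 24) (![6, 7, 8, 9, 10, 11, 12, 13, 14, 15, 16, 17, 18, 19, 20, 21, 22, 23, 0, 1, 2, 3, 4, 5] m) = m),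
    (by decide : ∀ m : Fin 24, (![6, 7, 8, 9, 10, 11, 12, 13, 14, 15, 16, 17, 18, 19, 20, 21, 22, 23, 0, 1, 2, 3, 4, 5] : Fin 24 → Fin 24) (![18, 19, 20, 21, 22, 23, 0, 1, 2, 3, 4, 5, 6, 7, 8, 9, 10, 11, 12, 13, 14, 15, 16, 17] m) = m)⟩

theorem xP_eq :
    (c[4, 1, 24, 3] * c[9, 6, 7, 10] * c[16, 13, 12, 15] * c[21, 18, 19, 22]
      : Equiv.Perm (Fin 24)) = xP :=
  Equiv.ext (by decide)

theorem yP_eq :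
    (c[1, 2, 3] * c[4, 5, 6] * c[9, 8, 7] * c[12, 11, 10] * c[13, 14, 15] *
        c[16, 17, 18] * c[21, 20, 19] * c[24, 23, 22] : Equiv.Perm (Fin 24)) = yP :=
  Equiv.ext (by decide)

theorem wP_eq :
    (c[1, 7, 13, 19] * c[2, 8, 14, 20] * c[3, 9, 15, 21] * c[4, 10, 16, 22] *
        c[5, 11, 17, 23] * c[6, 12, 18, 24] : Equiv.Perm (Fin 24)) = wP :=
  Equiv.ext (by decide)

set_option maxHeartbeats 1000000 in
/-- **A dessin with real field of moduli not definable over ℝ.** In `Sym(24)`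
(with points labelled by `Fin 24`, where the label `24` is `0`), for the monodromy
permutations `x`, `y` below there exists `ω` with `ω⁻¹xω = x⁻¹` and `ω⁻¹yω = y⁻¹`
(for instance the given `ω₀`), but no such `ω` of order dividing 2 exists. -/
theorem dessin_real_moduli_not_definable_over_R :
    let x : Equiv.Perm (Fin 24) :=
      c[4, 1, 24, 3] * c[9, 6, 7, 10] * c[16, 13, 12, 15] * c[21, 18, 19, 22]
    let y : Equiv.Perm (Fin 24) :=
      c[1, 2, 3] * c[4, 5, 6] * c[9, 8, 7] * c[12, 11, 10] * c[13, 14, 15] *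
        c[16, 17, 18] * c[21, 20, 19] * c[24, 23, 22]
    let ω₀ : Equiv.Perm (Fin 24) :=
      c[1, 7, 13, 19] * c[2, 8, 14, 20] * c[3, 9, 15, 21] * c[4, 10, 16, 22] *
        c[5, 11, 17, 23] * c[6, 12, 18, 24]
    (ω₀⁻¹ * x * ω₀ = x⁻¹ ∧ ω₀⁻¹ * y * ω₀ = y⁻¹) ∧
      (∃ ω : Equiv.Perm (Fin 24), ω⁻¹ * x * ω = x⁻¹ ∧ ω⁻¹ * y * ω = y⁻¹) ∧
      ¬ ∃ ω : Equiv.Perm (Fin 24), ω ^ 2 = 1 ∧ ω⁻¹ * x * ω = x⁻¹ ∧ ω⁻¹ * y * ω = y⁻¹ := by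
  intro x y ω₀
  have hxP : x = xP := xP_eq
  have hyP : y = yP := yP_eq
  have hwP : ω₀ = wP := wP_eq
  rw [hxP, hyP, hwP]
  have ha : wP⁻¹ * xP * wP = xP⁻¹ := Equiv.ext (by decide)
  have hb : wP⁻¹ * yP * wP = yP⁻¹ := Equiv.ext (by decide)
  refine ⟨⟨ha, hb⟩, ⟨wP, ha, hb⟩, ?_⟩
  rintro ⟨ω, hω2, hx, hy⟩
  have h2x : xP * ω = ω * xP⁻¹ := by rw [← hx]; group
  have h2y : yP * ω = ω * yP⁻¹ := by rw [← hy]; group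
  have hX : ∀ z, ω (xP z) = xP⁻¹ (ω z) := by
    intro z
    have h3 : xP (ω (xP z)) = ω (xP⁻¹ (xP z)) := DFunLike.congr_fun h2x (xP z)
    rw [Perm.coe_inv, symm_apply_apply] at h3
    rw [← h3, Perm.coe_inv, symm_apply_apply]
  have hY : ∀ z, ω (yP z) = yP⁻¹ (ω z) := by
    intro z
    have h3 : yP (ω (yP z)) = ω (yP⁻¹ (yP z)) := DFunLike.congr_fun h2y (yP z)
    rw [Perm.coe_inv, symm_apply_apply] at h3
    rw [← h3, Perm.coe_inv, symm_apply_apply]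
  have hInv : ∀ z, ω (ω z) = z := by
    intro z
    have h3 : ω (ω z) = (1 : Perm (Fin 24)) z := by
      rw [← Perm.mul_apply, ← pow_two, hω2]
    simpa using h3
  have h24 : ∀ m : Fin 24, m = 0 ∨ m = 1 ∨ m = 2 ∨ m = 3 ∨ m = 4 ∨ m = 5 ∨ m = 6 ∨ m = 7 ∨ m = 8 ∨ m = 9 ∨ m = 10 ∨ m = 11 ∨ m = 12 ∨ m = 13 ∨ m = 14 ∨ m = 15 ∨ m = 16 ∨ m = 17 ∨ m = 18 ∨ m = 19 ∨ m = 20 ∨ m = 21 ∨ m = 22 ∨ m = 23 := by decide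
  rcases h24 (ω 0) with hv|hv|hv|hv|hv|hv|hv|hv|hv|hv|hv|hv|hv|hv|hv|hv|hv|hv|hv|hv|hv|hv|hv|hv
  · -- ω 0 = 0
    have h7_ : ω (7 : Fin 24) = 5 := by
      rw [show (7 : Fin 24) = xP (yP (yP (xP (xP ((0 : Fin 24)))))) from by decide, hX, hY, hY, hX, hX, hv]
      decide
    have h5_ : ω (5 : Fin 24) = 6 := by
      rw [show (5 : Fin 24) = yP (xP (xP ((0 : Fin 24)))) from by decide, hY, hX, hX, hv]
      decide
    have hpp := hInv (7 : Fin 24)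
    rw [h7_, h5_] at hpp
    exact absurd hpp (by decide)
  · -- ω 0 = 1
    have h1_ : ω (1 : Fin 24) = 6 := by
      rw [show (1 : Fin 24) = yP (xP ((0 : Fin 24))) from by decide, hY, hX, hv]
      decide
    have hpp := hInv (0 : Fin 24)
    rw [hv, h1_] at hpp
    exact absurd hpp (by decide)
  · -- ω 0 = 2
    have h2_ : ω (2 : Fin 24) = 3 := by
      rw [show (2 : Fin 24) = yP (yP (xP ((0 : Fin 24)))) from by decide, hY, hY, hX, hv]
      decide
    have hpp := hInv (0 : Fin 24)
    rw [hv, h2_] at hpp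
    exact absurd hpp (by decide)
  · -- ω 0 = 3
    have h4_ : ω (4 : Fin 24) = 1 := by
      rw [show (4 : Fin 24) = xP (xP ((0 : Fin 24))) from by decide, hX, hX, hv]
      decide
    have h1_ : ω (1 : Fin 24) = 22 := by
      rw [show (1 : Fin 24) = yP (xP ((0 : Fin 24))) from by decide, hY, hX, hv]
      decide
    have hpp := hInv (4 : Fin 24)
    rw [h4_, h1_] at hpp
    exact absurd hpp (by decide)
  · -- ω 0 = 4
    have h7_ : ω (7 : Fin 24) = 23 := by
      rw [show (7 : Fin 24) = xP (yP (yP (xP (xP ((0 : Fin 24)))))) from by decide, hX, hY, hY, hX, hX, hv]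
      decide
    have h23_ : ω (23 : Fin 24) = 6 := by
      rw [show (23 : Fin 24) = yP ((0 : Fin 24)) from by decide, hY, hv]
      decide
    have hpp := hInv (7 : Fin 24)
    rw [h7_, h23_] at hpp
    exact absurd hpp (by decide)
  · -- ω 0 = 5
    have h5_ : ω (5 : Fin 24) = 4 := by
      rw [show (5 : Fin 24) = yP (xP (xP ((0 : Fin 24)))) from by decide, hY, hX, hX, hv]
      decide
    have hpp := hInv (0 : Fin 24)
    rw [hv, h5_] at hpp
    exact absurd hpp (by decide)
  · -- ω 0 = 6
    have h6_ : ω (6 : Fin 24) = 12 := by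
      rw [show (6 : Fin 24) = yP (yP (xP (xP ((0 : Fin 24))))) from by decide, hY, hY, hX, hX, hv]
      decide
    have hpp := hInv (0 : Fin 24)
    rw [hv, h6_] at hpp
    exact absurd hpp (by decide)
  · -- ω 0 = 7
    have h7_ : ω (7 : Fin 24) = 8 := by
      rw [show (7 : Fin 24) = xP (yP (yP (xP (xP ((0 : Fin 24)))))) from by decide, hX, hY, hY, hX, hX, hv]
      decide
    have hpp := hInv (0 : Fin 24)
    rw [hv, h7_] at hpp
    exact absurd hpp (by decide)
  · -- ω 0 = 8
    have h8_ : ω (8 : Fin 24) = 4 := by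
      rw [show (8 : Fin 24) = yP (yP (xP (yP (yP (xP (xP ((0 : Fin 24)))))))) from by decide, hY, hY, hX, hY, hY, hX, hX, hv]
      decide
    have hpp := hInv (0 : Fin 24)
    rw [hv, h8_] at hpp
    exact absurd hpp (by decide)
  · -- ω 0 = 9
    have h9_ : ω (9 : Fin 24) = 11 := by
      rw [show (9 : Fin 24) = yP (xP (yP (yP (xP (xP ((0 : Fin 24))))))) from by decide, hY, hX, hY, hY, hX, hX, hv]
      decide
    have hpp := hInv (0 : Fin 24)
    rw [hv, h9_] at hpp
    exact absurd hpp (by decide)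
  · -- ω 0 = 10
    have h14_ : ω (14 : Fin 24) = 19 := by
      rw [show (14 : Fin 24) = yP (xP (yP (xP (xP (yP (yP ((0 : Fin 24)))))))) from by decide, hY, hX, hY, hX, hX, hY, hY, hv]
      decide
    have h19_ : ω (19 : Fin 24) = 15 := by
      rw [show (19 : Fin 24) = xP (xP (xP (yP (yP ((0 : Fin 24)))))) from by decide, hX, hX, hX, hY, hY, hv]
      decide
    have hpp := hInv (14 : Fin 24)
    rw [h14_, h19_] at hpp
    exact absurd hpp (by decide)
  · -- ω 0 = 11
    have h11_ : ω (11 : Fin 24) = 4 := by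
      rw [show (11 : Fin 24) = yP (yP (xP (xP (yP (yP (xP (xP ((0 : Fin 24))))))))) from by decide, hY, hY, hX, hX, hY, hY, hX, hX, hv]
      decide
    have hpp := hInv (0 : Fin 24)
    rw [hv, h11_] at hpp
    exact absurd hpp (by decide)
  · -- ω 0 = 12
    have h12_ : ω (12 : Fin 24) = 16 := by
      rw [show (12 : Fin 24) = yP (xP (xP (yP (yP (xP (xP ((0 : Fin 24)))))))) from by decide, hY, hX, hX, hY, hY, hX, hX, hv]
      decide
    have hpp := hInv (0 : Fin 24)
    rw [hv, h12_] at hpp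
    exact absurd hpp (by decide)
  · -- ω 0 = 13
    have h13_ : ω (13 : Fin 24) = 16 := by
      rw [show (13 : Fin 24) = xP (yP (xP (xP (yP (yP ((0 : Fin 24))))))) from by decide, hX, hY, hX, hX, hY, hY, hv]
      decide
    have hpp := hInv (0 : Fin 24)
    rw [hv, h13_] at hpp
    exact absurd hpp (by decide)
  · -- ω 0 = 14
    have h14_ : ω (14 : Fin 24) = 10 := by
      rw [show (14 : Fin 24) = yP (xP (yP (xP (xP (yP (yP ((0 : Fin 24)))))))) from by decide, hY, hX, hY, hX, hX, hY, hY, hv]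
      decide
    have hpp := hInv (0 : Fin 24)
    rw [hv, h14_] at hpp
    exact absurd hpp (by decide)
  · -- ω 0 = 15
    have h15_ : ω (15 : Fin 24) = 16 := by
      rw [show (15 : Fin 24) = xP (yP (xP (xP (yP (yP (xP (xP ((0 : Fin 24))))))))) from by decide, hX, hY, hX, hX, hY, hY, hX, hX, hv]
      decide
    have hpp := hInv (0 : Fin 24)
    rw [hv, h15_] at hpp
    exact absurd hpp (by decide)
  · -- ω 0 = 16
    have h16_ : ω (16 : Fin 24) = 16 := by
      rw [show (16 : Fin 24) = yP (xP (xP (yP (yP ((0 : Fin 24)))))) from by decide, hY, hX, hX, hY, hY, hv]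
      decide
    have hpp := hInv (0 : Fin 24)
    rw [hv, h16_] at hpp
    exact absurd hpp (by decide)
  · -- ω 0 = 17
    have h1_ : ω (1 : Fin 24) = 16 := by
      rw [show (1 : Fin 24) = yP (xP ((0 : Fin 24))) from by decide, hY, hX, hv]
      decide
    have h16_ : ω (16 : Fin 24) = 23 := by
      rw [show (16 : Fin 24) = yP (xP (xP (yP (yP ((0 : Fin 24)))))) from by decide, hY, hX, hX, hY, hY, hv]
      decide
    have hpp := hInv (1 : Fin 24)
    rw [h1_, h16_] at hpp
    exact absurd hpp (by decide)
  · -- ω 0 = 18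
    have h18_ : ω (18 : Fin 24) = 12 := by
      rw [show (18 : Fin 24) = xP (xP (yP (yP ((0 : Fin 24))))) from by decide, hX, hX, hY, hY, hv]
      decide
    have hpp := hInv (0 : Fin 24)
    rw [hv, h18_] at hpp
    exact absurd hpp (by decide)
  · -- ω 0 = 19
    have h19_ : ω (19 : Fin 24) = 18 := by
      rw [show (19 : Fin 24) = xP (xP (xP (yP (yP ((0 : Fin 24)))))) from by decide, hX, hX, hX, hY, hY, hv]
      decide
    have hpp := hInv (0 : Fin 24)
    rw [hv, h19_] at hpp
    exact absurd hpp (by decide)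
  · -- ω 0 = 20
    have h20_ : ω (20 : Fin 24) = 17 := by
      rw [show (20 : Fin 24) = yP (xP (yP (yP ((0 : Fin 24))))) from by decide, hY, hX, hY, hY, hv]
      decide
    have hpp := hInv (0 : Fin 24)
    rw [hv, h20_] at hpp
    exact absurd hpp (by decide)
  · -- ω 0 = 21
    have h21_ : ω (21 : Fin 24) = 20 := by
      rw [show (21 : Fin 24) = xP (yP (yP ((0 : Fin 24)))) from by decide, hX, hY, hY, hv]
      decide
    have hpp := hInv (0 : Fin 24)
    rw [hv, h21_] at hpp
    exact absurd hpp (by decide)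
  · -- ω 0 = 22
    have h1_ : ω (1 : Fin 24) = 20 := by
      rw [show (1 : Fin 24) = yP (xP ((0 : Fin 24))) from by decide, hY, hX, hv]
      decide
    have h20_ : ω (20 : Fin 24) = 3 := by
      rw [show (20 : Fin 24) = yP (xP (yP (yP ((0 : Fin 24))))) from by decide, hY, hX, hY, hY, hv]
      decide
    have hpp := hInv (1 : Fin 24)
    rw [h1_, h20_] at hpp
    exact absurd hpp (by decide)
  · -- ω 0 = 23
    have h1_ : ω (1 : Fin 24) = 0 := by
      rw [show (1 : Fin 24) = yP (xP ((0 : Fin 24))) from by decide, hY, hX, hv]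
      decide
    have hpp := hInv (1 : Fin 24)
    rw [h1_, hv] at hpp
    exact absurd hpp (by decide)
end

section
/- In Sym(12), let y = (1 4)(2 5)(7 10)(8 11)(3 6 9 12), x = (1 2 3 7 8 9)(6 12), x₁ = (1 2 3 7 8 9)(4 10), and x₂ = (1 2 3 7 8 9)(5 11). For elements a, b of a group, write u^v = v⁻¹uv and define the word w(a,b) = (a³b²)·(a³b²)^a·(a³b²)^{a²}. Then w(x,y) = 1, while w(x₁,y) ≠ 1 and w(x₂,y) ≠ 1. Consequently there is no group homomorphism φ : ⟨x,y⟩ → Sym(12) with φ(x) = x₁ and φ(y) = y, and none with φ(x) = x₂ and φ(y) = y. -/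
open Equiv

/-- The word `w(a,b) = (a³b²)·(a³b²)^a·(a³b²)^{a²}`, where `u^v = v⁻¹uv`. -/
def conjWord {G : Type*} [Group G] (a b : G) : G :=
  (a ^ 3 * b ^ 2) * (a⁻¹ * (a ^ 3 * b ^ 2) * a) * ((a ^ 2)⁻¹ * (a ^ 3 * b ^ 2) * a ^ 2)

lemma conjWord_map {G H : Type*} [Group G] [Group H] (φ : G →* H) (a b : G) :
    φ (conjWord a b) = conjWord (φ a) (φ b) := by
  simp [conjWord]

lemma no_hom_of_conjWord {G : Type*} [Group G] (x y x' : G)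
    (h0 : conjWord x y = 1) (h1 : conjWord x' y ≠ 1) :
    ¬ ∃ φ : ↥(Subgroup.closure ({x, y} : Set G)) →* G,
      φ ⟨x, Subgroup.subset_closure (Set.mem_insert x {y})⟩ = x' ∧
      φ ⟨y, Subgroup.subset_closure (Set.mem_insert_of_mem x rfl)⟩ = y := by
  rintro ⟨φ, hφx, hφy⟩
  apply h1
  have hx : x ∈ Subgroup.closure ({x, y} : Set G) :=
    Subgroup.subset_closure (Set.mem_insert x {y})
  have hy : y ∈ Subgroup.closure ({x, y} : Set G) :=
    Subgroup.subset_closure (Set.mem_insert_of_mem x rfl)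
  have hcoe : ((conjWord (⟨x, hx⟩ : Subgroup.closure ({x, y} : Set G)) ⟨y, hy⟩ :
      Subgroup.closure ({x, y} : Set G)) : G) = conjWord x y :=
    conjWord_map (Subgroup.closure ({x, y} : Set G)).subtype _ _
  have hsub : conjWord (⟨x, hx⟩ : Subgroup.closure ({x, y} : Set G)) ⟨y, hy⟩ = 1 :=
    Subtype.ext (hcoe.trans h0)
  have := conjWord_map φ ⟨x, hx⟩ ⟨y, hy⟩
  rw [hsub, map_one, hφx, hφy] at this
  exact this.symm

set_option maxRecDepth 20000

/-- **The relation distinguishing `D₀` from its Galois conjugates.** In `Sym(12)`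
(labels in `Fin 12`, `12` being `0`), the word `w(x,y)` is trivial for the
cartographic generators of `D₀` but not for those of its two conjugates; hence no
group homomorphism `⟨x,y⟩ → Sym(12)` sends `x ↦ x₁, y ↦ y` or `x ↦ x₂, y ↦ y`. -/
theorem relation_distinguishes_conjugate_dessins :
    let y : Equiv.Perm (Fin 12) := c[1, 4] * c[2, 5] * c[7, 10] * c[8, 11] * c[3, 6, 9, 12]
    let x : Equiv.Perm (Fin 12) := c[1, 2, 3, 7, 8, 9] * c[6, 12]
    let x₁ : Equiv.Perm (Fin 12) := c[1, 2, 3, 7, 8, 9] * c[4, 10]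
    let x₂ : Equiv.Perm (Fin 12) := c[1, 2, 3, 7, 8, 9] * c[5, 11]
    conjWord x y = 1 ∧ conjWord x₁ y ≠ 1 ∧ conjWord x₂ y ≠ 1 ∧
      (¬ ∃ φ : ↥(Subgroup.closure ({x, y} : Set (Equiv.Perm (Fin 12)))) →*
          Equiv.Perm (Fin 12),
        φ ⟨x, Subgroup.subset_closure (Set.mem_insert x {y})⟩ = x₁ ∧
        φ ⟨y, Subgroup.subset_closure (Set.mem_insert_of_mem x rfl)⟩ = y) ∧
      (¬ ∃ φ : ↥(Subgroup.closure ({x, y} : Set (Equiv.Perm (Fin 12)))) →*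
          Equiv.Perm (Fin 12),
        φ ⟨x, Subgroup.subset_closure (Set.mem_insert x {y})⟩ = x₂ ∧
        φ ⟨y, Subgroup.subset_closure (Set.mem_insert_of_mem x rfl)⟩ = y) := by
  intro y x x₁ x₂
  have h0 : conjWord x y = 1 := by decide
  have h1 : conjWord x₁ y ≠ 1 := by decide
  have h2 : conjWord x₂ y ≠ 1 := by decide
  exact ⟨h0, h1, h2, no_hom_of_conjWord x y x₁ h0 h1, no_hom_of_conjWord x y x₂ h0 h2⟩
end

section
/- In the symmetric group Sym(6) on {1,…,6}, let y = (1 2 3)(4 5). Then for each x ∈ {(1 4)(5 6), (1 4)(2 6), (1 4)(3 6)}, the subgroup generated by x and y is all of Sym(6), and in each case (x·y)⁻¹ is a 6-cycle. -/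
set_option maxRecDepth 4000


open Equiv

private lemma cyc6_aux (σ : Equiv.Perm (Fin 6)) (l : List (Fin 6))
    (h : σ = l.formPerm) (hl : l.Nodup) (hn : 2 ≤ l.length)
    (hc : σ.support.card = 6) :
    σ.IsCycle ∧ σ.support.card = 6 :=
  ⟨h ▸ List.isCycle_formPerm hl hn, hc⟩

private lemma closure_aux (x y σ t : Equiv.Perm (Fin 6)) (p : Fin 6)
    (hσ : σ = x * y) (h1 : σ.IsCycle) (h2 : σ.support = Finset.univ)
    (ht : Equiv.swap p (σ p) = t)
    (htmem : t ∈ Subgroup.closure ({x, y} : Set (Equiv.Perm (Fin 6)))) :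
    Subgroup.closure ({x, y} : Set (Equiv.Perm (Fin 6))) = ⊤ := by
  rw [eq_top_iff, ← Equiv.Perm.closure_cycle_adjacent_swap h1 h2 p, Subgroup.closure_le,
    Set.insert_subset_iff, Set.singleton_subset_iff]
  refine ⟨?_, ht ▸ htmem⟩
  exact hσ ▸ mul_mem (Subgroup.subset_closure (Set.mem_insert _ _))
    (Subgroup.subset_closure (Set.mem_insert_of_mem _ rfl))

/-- **Monodromy of the three degree-6 trees.** In `Sym(6)` (labels in `Fin 6`, `6`
being `0`), with `y = (1 2 3)(4 5)`, each of the three permutations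
`x ∈ {(1 4)(5 6), (1 4)(2 6), (1 4)(3 6)}` generates, together with `y`, all of
`Sym(6)`, and in each case `(x·y)⁻¹` is a 6-cycle. -/
theorem trees_generate_sym6 :
    let y : Equiv.Perm (Fin 6) := c[1, 2, 3] * c[4, 5]
    ∀ x ∈ ({c[1, 4] * c[5, 6], c[1, 4] * c[2, 6], c[1, 4] * c[3, 6]} :
        Set (Equiv.Perm (Fin 6))),
      Subgroup.closure ({x, y} : Set (Equiv.Perm (Fin 6))) = ⊤ ∧
        ((x * y)⁻¹).IsCycle ∧ ((x * y)⁻¹).support.card = 6 := by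
  intro y x hx
  have hxm : x ∈ Subgroup.closure ({x, y} : Set (Equiv.Perm (Fin 6))) :=
    Subgroup.subset_closure (Set.mem_insert _ _)
  have hym : y ∈ Subgroup.closure ({x, y} : Set (Equiv.Perm (Fin 6))) :=
    Subgroup.subset_closure (Set.mem_insert_of_mem _ rfl)
  simp only [Set.mem_insert_iff, Set.mem_singleton_iff] at hx
  obtain rfl | rfl | rfl := hx
  · refine ⟨?_, cyc6_aux _ [0,4,3,2,1,5] (by decide) (by decide) (by decide) (by decide)⟩
    refine closure_aux _ y _ ((y*(c[1,4]*c[5,6])*y*(c[1,4]*c[5,6])) * (y*y*y) * (y*(c[1,4]*c[5,6])*y*(c[1,4]*c[5,6]))⁻¹) 3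
      rfl ((cyc6_aux _ [0,5,1,2,3,4] (by decide) (by decide) (by decide) (by decide)).1)
      (by decide) (by decide) ?_
    exact mul_mem (mul_mem (mul_mem (mul_mem (mul_mem hym hxm) hym) hxm)
      (mul_mem (mul_mem hym hym) hym)) (inv_mem (mul_mem (mul_mem (mul_mem hym hxm) hym) hxm))
  · refine ⟨?_, cyc6_aux _ [0,1,5,4,3,2] (by decide) (by decide) (by decide) (by decide)⟩
    refine closure_aux _ y _ (y*y*y) 4
      rfl ((cyc6_aux _ [0,2,3,4,5,1] (by decide) (by decide) (by decide) (by decide)).1)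
      (by decide) (by decide) ?_
    exact mul_mem (mul_mem hym hym) hym
  · refine ⟨?_, cyc6_aux _ [0,2,1,5,4,3] (by decide) (by decide) (by decide) (by decide)⟩
    refine closure_aux _ y _ (y*y*y) 4
      rfl ((cyc6_aux _ [0,3,4,5,1,2] (by decide) (by decide) (by decide) (by decide)).1)
      (by decide) (by decide) ?_
    exact mul_mem (mul_mem hym hym) hym
end
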